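/- Let φ : A₀ → A ⊗ B(k̂) be a structure map (hermitian, φ(1)=0, φ(ab) = φ(a)ι(b) + ι(a)φ(b) + φ(a)Δφ(b)) on a dense unital *-subalgebra A₀ of a unital C*-algebra A, and suppose every matrix algebra M_n(A₀) is square-root closed (M_n(A₀)₊ = {B² : B ∈ M_n(A₀)₊}). If ω is a positive normal functional on B(k̂), then the operator μ = (id_A ⊗ ω) ∘ φ with domain A₀ is dissipative. -/

import Mathlib

open ComplexConjugate

section auxgen

/-- A linear map preserving selfadjointness is star-preserving. -/
lemma aux_starpres {B V : Type*} [NonUnitalRing B] [StarRing B] [Module ℂ B] [StarModule ℂ B]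
    [AddCommGroup V] [Module ℂ V] [StarAddMonoid V] [StarModule ℂ V]
    (F : B →ₗ[ℂ] V) (h : ∀ x : B, IsSelfAdjoint x → IsSelfAdjoint (F x)) (z : B) :
    F (star z) = star (F z) := by
  set hh : B := z + star z with hhh
  set kk : B := Complex.I • (z - star z) with hkk
  have hsh : IsSelfAdjoint hh := by
    simp [hhh, IsSelfAdjoint, star_add, add_comm]
  have hsk : IsSelfAdjoint kk := by
    rw [IsSelfAdjoint, hkk, star_smul, star_sub, star_star, Complex.star_def, Complex.conj_I,
      neg_smul, smul_sub, smul_sub, neg_sub]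
  have hz : z = (((1/2:ℝ)):ℂ) • hh - ((((1/2:ℝ)):ℂ) * Complex.I) • kk := by
    rw [hhh, hkk]
    match_scalars <;> (try ring_nf) <;> (try simp [Complex.I_sq]) <;> (try ring)
  have hsz : star z = (((1/2:ℝ)):ℂ) • hh + ((((1/2:ℝ)):ℂ) * Complex.I) • kk := by
    rw [hhh, hkk]
    match_scalars <;> (try ring_nf) <;> (try simp [Complex.I_sq]) <;> (try ring)
  have e1 : F (star z) = (((1/2:ℝ)):ℂ) • F hh + ((((1/2:ℝ)):ℂ) * Complex.I) • F kk := by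
    rw [hsz, map_add, map_smul, map_smul]
  have e2 : F z = (((1/2:ℝ)):ℂ) • F hh - ((((1/2:ℝ)):ℂ) * Complex.I) • F kk := by
    rw [hz, map_sub, map_smul, map_smul]
  rw [e1, e2, star_sub, star_smul, star_smul, (h hh hsh).star_eq, (h kk hsk).star_eq]
  simp only [star_mul', Complex.star_def, Complex.conj_I, Complex.conj_ofReal]
  module

lemma aux_eq_of_re {c : ℂ} {r : ℝ} (h1 : ‖c‖ ≤ r) (h2 : c.re = r) : c = (r:ℂ) := by
  have h4 : c.re^2 + c.im^2 = ‖c‖^2 := by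
    rw [Complex.sq_norm, Complex.normSq_apply]; ring
  have h3 : c.re^2 + c.im^2 ≤ r^2 := by nlinarith [norm_nonneg c]
  rw [h2] at h3
  have him2 : c.im^2 = 0 := le_antisymm (by linarith) (sq_nonneg c.im)
  have him : c.im = 0 := pow_eq_zero_iff two_ne_zero |>.mp him2
  exact Complex.ext (by simp [h2]) (by simp [him])

end auxgen

section aux
variable {A : Type*} [NormedRing A] [StarRing A] [CStarRing A] [NormedAlgebra ℂ A]
  [CompleteSpace A] [StarModule ℂ A]

omit [NormedAlgebra ℂ A] [CompleteSpace A] [StarModule ℂ A] in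
lemma aux_norm_one_le : ‖(1 : A)‖ ≤ 1 := by
  have h : ‖(1:A)‖ * ‖(1:A)‖ = ‖(1:A)‖ := by
    rw [← CStarRing.norm_star_mul_self (x := (1:A))]; simp
  nlinarith [norm_nonneg (1:A)]

/-- A local `CStarAlgebra` instance assembled from unbundled assumptions. -/
@[reducible] def auxCSA : CStarAlgebra A :=
  { ‹NormedRing A›, ‹StarRing A›, ‹CompleteSpace A›, ‹CStarRing A›,
    ‹NormedAlgebra ℂ A›, ‹StarModule ℂ A› with }

lemma aux_im_zero (f : A →L[ℂ] ℂ) (hf : ‖f‖ ≤ 1) (hf1 : f 1 = 1)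
    {x : A} (hx : IsSelfAdjoint x) : (f x).im = 0 := by
  have key : ∀ t : ℝ, ((f x).re)^2 + ((f x).im + t)^2 ≤ ‖x‖^2 + t^2 := by
    intro t
    set w : A := x + ((t : ℂ) * Complex.I) • 1 with hw
    have hfw : f w = f x + (t : ℂ) * Complex.I := by
      simp [hw, map_add, map_smul, hf1, smul_eq_mul]
    have hsw : star w * w = x * x + ((t:ℂ)^2) • 1 := by
      have hstar : star w = x + (-((t : ℂ) * Complex.I)) • 1 := by
        simp [hw, star_smul, hx.star_eq, Complex.ext_iff]
      rw [hstar, hw]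
      simp only [add_mul, mul_add, smul_mul_assoc, mul_smul_comm, one_mul, mul_one,
        smul_smul]
      match_scalars <;> (try ring_nf) <;> (try simp [Complex.I_sq])
    have hnw : ‖w‖^2 ≤ ‖x‖^2 + t^2 := by
      have h1 : ‖w‖^2 = ‖star w * w‖ := by
        rw [CStarRing.norm_star_mul_self]; ring
      rw [h1, hsw]
      calc ‖x * x + ((t:ℂ)^2) • 1‖ ≤ ‖x * x‖ + ‖((t:ℂ)^2) • (1:A)‖ := norm_add_le _ _
        _ ≤ ‖x‖ * ‖x‖ + t^2 * 1 := by
            gcongr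
            · exact norm_mul_le _ _
            · rw [norm_smul]
              have h5 : ‖(t:ℂ)^2‖ = t^2 := by
                rw [norm_pow, Complex.norm_real, Real.norm_eq_abs, sq_abs]
              rw [h5]
              exact mul_le_mul_of_nonneg_left aux_norm_one_le (sq_nonneg t)
        _ = ‖x‖^2 + t^2 := by ring
    have habs : ‖f w‖ ≤ ‖w‖ := by
      calc ‖f w‖ ≤ ‖f‖ * ‖w‖ := f.le_opNorm w
        _ ≤ 1 * ‖w‖ := by gcongr
        _ = ‖w‖ := one_mul _
    have h2 : ‖f w‖^2 ≤ ‖x‖^2 + t^2 := by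
      calc ‖f w‖^2 ≤ ‖w‖^2 := by gcongr
        _ ≤ ‖x‖^2 + t^2 := hnw
    have h3 : ‖f w‖^2 = ((f x).re)^2 + ((f x).im + t)^2 := by
      rw [hfw, Complex.sq_norm, Complex.normSq_apply]
      simp [Complex.add_re, Complex.add_im, Complex.mul_re, Complex.mul_im]
      ring
    rw [← h3]; exact h2
  by_contra hb
  set β := (f x).im with hβ
  have hβ0 : β ≠ 0 := hb
  set K := ‖x‖^2 - ((f x).re)^2 - β^2 with hK
  have hexp : β^2 + 2*β*((K + 1)/(2*β)) = β^2 + (K+1) := by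
    field_simp
  nlinarith [key ((K + 1) / (2 * β)), sq_nonneg β]

lemma aux_conj (f : A →L[ℂ] ℂ) (him : ∀ x : A, IsSelfAdjoint x → (f x).im = 0) (z : A) :
    f (star z) = conj (f z) := by
  have := aux_starpres (f : A →ₗ[ℂ] ℂ) (fun x hx => ?_) z
  · simpa using this
  · rw [IsSelfAdjoint, RCLike.star_def, RCLike.conj_eq_iff_im]
    simpa using him x hx

variable [PartialOrder A] [StarOrderedRing A]

lemma aux_re_nonneg (f : A →L[ℂ] ℂ) (hf : ‖f‖ ≤ 1) (hf1 : f 1 = 1)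
    {x : A} (hx : 0 ≤ x) : 0 ≤ (f x).re := by
  letI : CStarAlgebra A := auxCSA
  have hsa : IsSelfAdjoint x := .of_nonneg hx
  set y := algebraMap ℝ A ‖x‖ - x with hy
  have hy0 : 0 ≤ y := sub_nonneg.mpr hsa.le_algebraMap_norm_self
  have hyn : ‖y‖ ≤ ‖x‖ := by
    rw [CStarAlgebra.norm_le_iff_le_algebraMap y (norm_nonneg x) hy0, hy]
    exact sub_le_self _ hx
  have hfy : ‖f y‖ ≤ ‖x‖ :=
    le_trans (le_trans (f.le_opNorm y) (by
      calc ‖f‖ * ‖y‖ ≤ 1 * ‖y‖ := by gcongr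
        _ = ‖y‖ := one_mul _)) hyn
  have halg : f (algebraMap ℝ A ‖x‖) = (‖x‖ : ℂ) := by
    rw [Algebra.algebraMap_eq_smul_one, ← Complex.coe_smul, map_smul, hf1, smul_eq_mul, mul_one]
  have hre : (f y).re = ‖x‖ - (f x).re := by
    rw [hy, map_sub, halg]; simp
  have habs : |(f y).re| ≤ ‖x‖ := le_trans (Complex.abs_re_le_norm _) (by
    exact hfy)
  rw [hre] at habs
  have := abs_le.mp habs
  linarith [this.2]

lemma aux_mono (f : A →L[ℂ] ℂ) (hf : ‖f‖ ≤ 1) (hf1 : f 1 = 1)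
    {x y : A} (hxy : x ≤ y) : (f x).re ≤ (f y).re := by
  have := aux_re_nonneg f hf hf1 (sub_nonneg.mpr hxy)
  rw [map_sub] at this
  simp only [Complex.sub_re] at this
  linarith

lemma aux_bound (f : A →L[ℂ] ℂ) (hf : ‖f‖ ≤ 1) (hf1 : f 1 = 1)
    (x : A) : (f (star x * x)).re ≤ ‖x‖^2 := by
  letI : CStarAlgebra A := auxCSA
  have h0 : (0:A) ≤ star x * x := star_mul_self_nonneg x
  have h1 : star x * x ≤ algebraMap ℝ A ‖star x * x‖ :=
    (IsSelfAdjoint.of_nonneg h0).le_algebraMap_norm_self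
  have h2 := aux_mono f hf hf1 h1
  have halg : f (algebraMap ℝ A ‖star x * x‖) = (‖star x * x‖ : ℂ) := by
    rw [Algebra.algebraMap_eq_smul_one, ← Complex.coe_smul, map_smul, hf1, smul_eq_mul, mul_one]
  rw [halg] at h2
  simp only [Complex.ofReal_re] at h2
  calc (f (star x * x)).re ≤ ‖star x * x‖ := h2
    _ = ‖x‖ * ‖x‖ := CStarRing.norm_star_mul_self
    _ = ‖x‖^2 := by ring

lemma aux_cs (f : A →L[ℂ] ℂ)
    (hconj : ∀ z : A, f (star z) = conj (f z))
    (hpos : ∀ x : A, 0 ≤ x → 0 ≤ (f x).re)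
    (x y : A) : ‖f (star x * y)‖^2 ≤ (f (star x * x)).re * (f (star y * y)).re := by
  set s := f (star x * y) with hs
  have hC : 0 ≤ (f (star x * x)).re := hpos _ (star_mul_self_nonneg x)
  have hD : 0 ≤ (f (star y * y)).re := hpos _ (star_mul_self_nonneg y)
  by_cases h0 : s = 0
  · rw [h0]; simpa using mul_nonneg hC hD
  · set u : ℂ := conj s / (‖s‖ : ℂ) with hu
    have hsn : (‖s‖ : ℂ) ≠ 0 := by
      simpa using norm_ne_zero_iff.mpr h0
    have h1 : conj s * s = ((‖s‖^2 : ℝ) : ℂ) := by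
      rw [mul_comm, Complex.mul_conj]
      norm_cast
      rw [Complex.normSq_eq_norm_sq]
    have hus : u * s = (‖s‖ : ℂ) := by
      rw [hu, div_mul_eq_mul_div, h1, eq_comm, eq_div_iff hsn]
      push_cast; ring
    have huu : conj u * u = 1 := by
      have h2 : conj u = s / (‖s‖:ℂ) := by
        rw [hu, map_div₀, Complex.conj_conj, Complex.conj_ofReal]
      rw [h2, hu, div_mul_div_comm, mul_comm s _, h1]
      rw [div_eq_one_iff_eq (by simpa using mul_ne_zero hsn hsn)]
      push_cast; ring
    have key : ∀ t : ℝ, 0 ≤ (f (star y * y)).re * (t*t) + (2*‖s‖) * t + (f (star x * x)).re := by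
      intro t
      set c : ℂ := (t:ℂ) * u with hc
      set w : A := x + c • y with hw
      have h0w : 0 ≤ (f (star w * w)).re := hpos _ (star_mul_self_nonneg w)
      have hexp : star w * w = star x * x + c • (star x * y) + star c • (star y * x)
          + (star c * c) • (star y * y) := by
        rw [hw, star_add, star_smul, add_mul, mul_add, mul_add, smul_mul_assoc, smul_mul_assoc,
          mul_smul_comm, mul_smul_comm, smul_smul]
        abel
      have hfyx : f (star y * x) = conj s := by
        rw [← hconj (star x * y), star_mul, star_star]
      have hstarc : star c = (t:ℂ) * conj u := by
        rw [hc, Complex.star_def, map_mul, Complex.conj_ofReal]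
      have e1 : c * s = ((t * ‖s‖ : ℝ) : ℂ) := by
        rw [hc, mul_assoc, hus]; push_cast; ring
      have e2 : star c * conj s = ((t * ‖s‖ : ℝ) : ℂ) := by
        rw [hstarc, mul_assoc, ← map_mul, hus, Complex.conj_ofReal]; push_cast; ring
      have e3 : star c * c = ((t^2 : ℝ) : ℂ) := by
        rw [hstarc, hc]
        calc (t:ℂ) * conj u * ((t:ℂ) * u) = ((t:ℂ) * (t:ℂ)) * (conj u * u) := by ring
          _ = ((t^2 : ℝ) : ℂ) := by rw [huu]; push_cast; ring
      have hfw : f (star w * w) = f (star x * x) + ((t * ‖s‖ : ℝ) : ℂ)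
          + ((t * ‖s‖ : ℝ) : ℂ) + ((t^2 : ℝ) : ℂ) * f (star y * y) := by
        rw [hexp, map_add, map_add, map_add, map_smul, map_smul, map_smul,
          smul_eq_mul, smul_eq_mul, smul_eq_mul, hfyx, ← hs, e1, e2, e3]
      have h0w' := h0w
      rw [hfw] at h0w'
      simp only [Complex.add_re, Complex.mul_re, Complex.ofReal_re, Complex.ofReal_im] at h0w'
      ring_nf at h0w' ⊢
      linarith
    have hd := discrim_le_zero key
    rw [discrim] at hd
    nlinarith [norm_nonneg s]

lemma aux_state [Nontrivial A] {b : A} (hb : 0 ≤ b) :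
    ∃ f : A →L[ℂ] ℂ, ‖f‖ ≤ 1 ∧ f 1 = 1 ∧ f b = (‖b‖ : ℂ) := by
  letI : CStarAlgebra A := auxCSA
  have hx : ‖b + 1‖ = ‖b‖ + 1 := by
    refine le_antisymm (le_trans (norm_add_le _ _) ?_) ?_
    · have := aux_norm_one_le (A := A); linarith
    · have h1 : ‖b‖ ∈ spectrum ℝ b := CStarAlgebra.norm_mem_spectrum_of_nonneg hb
      have h2 : ‖b‖ + 1 ∈ spectrum ℝ (b + 1) := by
        rw [spectrum.add_mem_iff]
        simpa using h1
      have h3 := spectrum.norm_le_norm_of_mem h2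
      rw [Real.norm_eq_abs, abs_of_nonneg (by positivity)] at h3
      exact h3
  have hne : b + 1 ≠ 0 := by
    intro h
    rw [h, norm_zero] at hx
    nlinarith [norm_nonneg b]
  obtain ⟨f, hfn, hfv⟩ := exists_dual_vector ℂ (b + 1) (norm_ne_zero_iff.mpr hne)
  have hfb : ‖f b‖ ≤ ‖b‖ := by
    calc ‖f b‖ ≤ ‖f‖ * ‖b‖ := f.le_opNorm b
      _ = ‖b‖ := by rw [hfn, one_mul]
  have hf1 : ‖f 1‖ ≤ 1 := by
    calc ‖f 1‖ ≤ ‖f‖ * ‖1‖ := f.le_opNorm 1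
      _ ≤ 1 := by rw [hfn, one_mul]; exact aux_norm_one_le
  have hsum : f b + f 1 = ((‖b‖ : ℝ) : ℂ) + 1 := by
    rw [← map_add, hfv, hx]; simp [RCLike.ofReal_add]
  have hsre : (f b).re + (f 1).re = ‖b‖ + 1 := by
    have := congrArg Complex.re hsum
    simpa using this
  have hrb : (f b).re ≤ ‖b‖ :=
    le_trans (Complex.re_le_norm _) (by exact hfb)
  have hr1 : (f 1).re ≤ 1 :=
    le_trans (Complex.re_le_norm _) (by exact hf1)
  have heq1 : (f 1).re = 1 := by linarith
  have heqb : (f b).re = ‖b‖ := by linarith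
  exact ⟨f, hfn.le, by simpa using aux_eq_of_re hf1 heq1, aux_eq_of_re hfb heqb⟩

/-- A positive linear map out of a C⋆-algebra preserves selfadjointness. -/
lemma aux_pos_selfadj {V : Type*} [AddCommGroup V] [Module ℂ V] [StarAddMonoid V]
    [StarModule ℂ V] [PartialOrder V] [CovariantClass V V (· + ·) (· ≤ ·)]
    (hV : ∀ v : V, 0 ≤ v → star v = v)
    (E : A →ₗ[ℂ] V) (hEpos : ∀ x : A, 0 ≤ x → 0 ≤ E x)
    {h : A} (hh : IsSelfAdjoint h) : IsSelfAdjoint (E h) := by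
  letI : CStarAlgebra A := auxCSA
  have hdecomp : h⁺ - h⁻ = h := CFC.posPart_sub_negPart h hh
  have h1 : star (E h⁺) = E h⁺ := hV _ (hEpos _ (CFC.posPart_nonneg h))
  have h2 : star (E h⁻) = E h⁻ := hV _ (hEpos _ (CFC.negPart_nonneg h))
  rw [IsSelfAdjoint, ← hdecomp, map_sub, star_sub, h1, h2]

end aux


set_option maxHeartbeats 1000000

/-- Let `φ` be a structure map (hermitian, `φ(1) = 0`, and
`φ(ab) = φ(a)ι(b) + ι(a)φ(b) + φ(a)Δφ(b)`) on a dense unital ⋆-subalgebra `A₀` of a unital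
C⋆-algebra `A`, with values in a unital C⋆-algebra `B` playing the role of `A ⊗ B(k̂)`
(with ampliation `ι` and ampliated projection `Δ`), and suppose that every matrix algebra
`M_n(A₀)` is square-root closed.  If `ω` is a positive normal functional on `B(k̂)` — whose
slice `E = id_A ⊗ ω : B → A` is a positive `A`-bimodule map — then the operator
`μ = E ∘ φ` with domain `A₀` is dissipative: `λ‖a‖ ≤ ‖λa − μ(a)‖` for all `λ > 0`. -/
theorem structure_map_slice_dissipative
    {A : Type*} [NormedRing A] [StarRing A] [CStarRing A] [NormedAlgebra ℂ A]
    [CompleteSpace A] [StarModule ℂ A] [PartialOrder A] [StarOrderedRing A]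
    {B : Type*} [NormedRing B] [StarRing B] [CStarRing B] [NormedAlgebra ℂ B]
    [CompleteSpace B] [StarModule ℂ B] [PartialOrder B] [StarOrderedRing B]
    (ι : A →⋆ₐ[ℂ] B)
    (Δ : B) (hΔstar : star Δ = Δ) (hΔidem : Δ * Δ = Δ)
    (hΔcomm : ∀ a : A, Δ * ι a = ι a * Δ)
    (A₀ : StarSubalgebra ℂ A)
    (hdense : Dense (A₀ : Set A))
    (hsqrt : ∀ (n : ℕ) (M : Matrix (Fin n) (Fin n) A),
      (∀ i j, M i j ∈ A₀) → (∃ N : Matrix (Fin n) (Fin n) A, M = star N * N) →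
      ∃ R : Matrix (Fin n) (Fin n) A, (∀ i j, R i j ∈ A₀) ∧
        (∃ C : Matrix (Fin n) (Fin n) A, R = star C * C) ∧ M = R * R)
    (φ : A₀ →ₗ[ℂ] B)
    (hherm : ∀ a : A₀, φ (star a) = star (φ a))
    (hone : φ 1 = 0)
    (hmult : ∀ a b : A₀, φ (a * b) = φ a * ι (b : A) + ι (a : A) * φ b + φ a * Δ * φ b)
    (E : B →ₗ[ℂ] A)
    (hEpos : ∀ x : B, 0 ≤ x → 0 ≤ E x)
    (hEl : ∀ (x : B) (a : A), E (ι a * x) = a * E x)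
    (hEr : ∀ (x : B) (a : A), E (x * ι a) = E x * a) :
    ∀ (a : A₀) (lam : ℝ), 0 < lam →
      lam * ‖(a : A)‖ ≤ ‖(lam : ℂ) • (a : A) - E (φ a)‖ := by
  intro a lam hlam
  rcases subsingleton_or_nontrivial A with hsub | hnt
  · have h1 : ‖(a:A)‖ = 0 := by rw [Subsingleton.elim ((a:A)) (0:A)]; simp
    rw [h1, mul_zero]; exact norm_nonneg _
  by_cases ha0 : (a : A) = 0
  · rw [ha0, norm_zero, mul_zero]; exact norm_nonneg _
  -- E is star-preserving
  have hEstar : ∀ x : B, E (star x) = star (E x) :=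
    aux_starpres E (fun x hx =>
      aux_pos_selfadj (fun v hv => (IsSelfAdjoint.of_nonneg hv).star_eq) E hEpos hx)
  -- positivity of sandwiches by Δ
  have hgen : ∀ ψ : B, (0:B) ≤ star ψ * Δ * ψ := by
    intro ψ
    have h : star ψ * Δ * ψ = star (Δ * ψ) * (Δ * ψ) := by
      calc star ψ * Δ * ψ = star ψ * (Δ * Δ) * ψ := by rw [hΔidem]
        _ = (star ψ * Δ) * (Δ * ψ) := by rw [← mul_assoc, mul_assoc]
        _ = star (Δ * ψ) * (Δ * ψ) := by rw [star_mul, hΔstar]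
    rw [h]; exact star_mul_self_nonneg _
  -- set up state
  set av : A := (a : A) with hav
  have hbnn : (0:A) ≤ star av * av := star_mul_self_nonneg av
  obtain ⟨f, hfn, hf1, hfb⟩ := aux_state hbnn
  have him : ∀ x : A, IsSelfAdjoint x → (f x).im = 0 := fun x hx => aux_im_zero f hfn hf1 hx
  have hconj : ∀ z : A, f (star z) = conj (f z) := aux_conj f him
  have hpos : ∀ x : A, 0 ≤ x → 0 ≤ (f x).re := fun x hx => aux_re_nonneg f hfn hf1 hx
  set nb : ℝ := ‖star av * av‖ with hnb
  have hnbav : nb = ‖av‖ * ‖av‖ := CStarRing.norm_star_mul_self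
  -- elements of A₀
  set b₀ : A₀ := star a * a with hb₀
  have hb₀c : (b₀ : A) = star av * av := rfl
  set m₀ : A₀ := (nb : ℂ) • 1 - b₀ with hm₀
  have hm₀c : (m₀ : A) = (nb:ℂ) • (1:A) - star av * av := rfl
  have hm₀nn : (0:A) ≤ (m₀ : A) := by
    letI : CStarAlgebra A := auxCSA
    have h := (IsSelfAdjoint.of_nonneg hbnn).le_algebraMap_norm_self
    rw [hm₀c, sub_nonneg]
    rwa [Algebra.algebraMap_eq_smul_one, ← Complex.coe_smul] at h
  -- square-root closure at n = 1
  have hMsq : ∃ N : Matrix (Fin 1) (Fin 1) A,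
      (fun _ _ => (m₀:A) : Matrix (Fin 1) (Fin 1) A) = star N * N := by
    letI : CStarAlgebra A := auxCSA
    refine ⟨Matrix.of fun _ _ => CFC.sqrt (m₀:A), ?_⟩
    ext i j
    rw [Matrix.mul_apply]
    rw [Fin.sum_univ_one]
    rw [Matrix.star_apply]
    simp only [Matrix.of_apply]
    rw [(IsSelfAdjoint.of_nonneg (CFC.sqrt_nonneg (a := (m₀:A)))).star_eq,
      CFC.sqrt_mul_sqrt_self _ hm₀nn]
  obtain ⟨R, hRmem, ⟨C, hC⟩, hRR⟩ :=
    hsqrt 1 (fun _ _ => (m₀ : A)) (fun _ _ => m₀.2) hMsq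
  set r : A := R 0 0 with hr
  have hrA₀ : r ∈ A₀ := hRmem 0 0
  set r₀ : A₀ := ⟨r, hrA₀⟩ with hr₀
  have hrsq : r = star (C 0 0) * (C 0 0) := by
    have h := congrFun (congrFun hC 0) 0
    rw [Matrix.mul_apply, Fin.sum_univ_one, Matrix.star_apply] at h
    exact h
  have hrsa : star r = r := by rw [hrsq]; simp [star_mul]
  have hm_rr : (m₀ : A) = r * r := by
    have h := congrFun (congrFun hRR 0) 0
    rw [Matrix.mul_apply, Fin.sum_univ_one] at h
    exact h
  have hm₀eq : m₀ = r₀ * r₀ := Subtype.ext (by rw [hm_rr]; rfl)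
  -- f vanishes on r * r
  have hfrr : f (star r * r) = 0 := by
    rw [hrsa]
    have h1 : f ((m₀:A)) = 0 := by
      rw [hm₀c, map_sub, map_smul, hf1, smul_eq_mul, mul_one, hfb, sub_self]
    rw [← hm_rr]; exact h1
  -- Cauchy-Schwarz kills mixed terms
  have hkill1 : ∀ y : A, f (y * r) = 0 := by
    intro y
    have hcs := aux_cs f hconj hpos (star y) r
    rw [star_star, hfrr] at hcs
    simp only [Complex.zero_re, mul_zero] at hcs
    have h6 : ‖f (y * r)‖ = 0 := by nlinarith [norm_nonneg (f (y * r))]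
    exact norm_eq_zero.mp h6
  have hkill2 : ∀ y : A, f (r * y) = 0 := by
    intro y
    have hcs := aux_cs f hconj hpos r y
    rw [hfrr] at hcs
    rw [hrsa] at hcs
    simp only [Complex.zero_re, zero_mul] at hcs
    have h6 : ‖f (r * y)‖ = 0 := by nlinarith [norm_nonneg (f (r * y))]
    exact norm_eq_zero.mp h6
  -- hermiticity of φ r₀
  have hφr : star (φ r₀) = φ r₀ := by
    rw [← hherm r₀]
    congr 1
    exact Subtype.ext hrsa
  -- Key inequality 1 : (f (E (φ b₀))).re ≤ 0
  have hkey1 : (f (E (φ b₀))).re ≤ 0 := by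
    have hφm : φ m₀ = - φ b₀ := by
      rw [hm₀, map_sub, map_smul, hone, smul_zero, zero_sub]
    have hφm' : φ m₀ = φ r₀ * ι r + ι r * φ r₀ + φ r₀ * Δ * φ r₀ := by
      rw [hm₀eq, hmult r₀ r₀]
    have hPr : (0:B) ≤ φ r₀ * Δ * φ r₀ := by
      have h := hgen (φ r₀)
      rwa [hφr] at h
    have hEφm : E (φ m₀) = E (φ r₀) * r + r * E (φ r₀) + E (φ r₀ * Δ * φ r₀) := by
      rw [hφm', map_add, map_add, hEr, hEl]
    have h3 : 0 ≤ (f (E (φ r₀ * Δ * φ r₀))).re := hpos _ (hEpos _ hPr)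
    have h4 : 0 ≤ (f (E (φ m₀))).re := by
      rw [hEφm, map_add, map_add, hkill1 (E (φ r₀)), hkill2 (E (φ r₀))]
      simpa using h3
    rw [hφm, map_neg, map_neg] at h4
    simp only [Complex.neg_re] at h4
    linarith
  -- Key inequality 2 : Re f(av* μ(a)) ≤ 0
  set yv : A := E (φ a) with hyv
  have hφb : φ b₀ = star (φ a) * ι av + ι (star av) * φ a + star (φ a) * Δ * φ a := by
    rw [hb₀, hmult (star a) a, hherm a]
    rfl
  have hEb : E (φ b₀) = star yv * av + star av * yv + E (star (φ a) * Δ * φ a) := by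
    rw [hφb, map_add, map_add, hEr, hEl, hEstar]
  have h2Re : (f (star av * yv)).re ≤ 0 := by
    have h3 : 0 ≤ (f (E (star (φ a) * Δ * φ a))).re := hpos _ (hEpos _ (hgen (φ a)))
    have h5 := hkey1
    rw [hEb, map_add, map_add] at h5
    simp only [Complex.add_re] at h5
    have hReEq : (f (star yv * av)).re = (f (star av * yv)).re := by
      have he : star yv * av = star (star av * yv) := by rw [star_mul, star_star]
      rw [he, hconj]
      simp
    rw [hReEq] at h5
    linarith
  -- final assembly
  set z : A := (lam : ℂ) • av - yv with hz
  have hfz : f (star av * z) = (lam:ℂ) * f (star av * av) - f (star av * yv) := by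
    rw [hz, mul_sub, mul_smul_comm, map_sub, map_smul, smul_eq_mul]
  have hlow : lam * (‖av‖ * ‖av‖) ≤ (f (star av * z)).re := by
    rw [hfz]
    simp only [Complex.sub_re, Complex.mul_re, Complex.ofReal_re, Complex.ofReal_im, hfb]
    simp only [Complex.ofReal_re, Complex.ofReal_im, mul_zero, zero_mul, sub_zero]
    rw [hnbav]
    linarith [h2Re]
  have hup : ‖f (star av * z)‖^2 ≤ (‖av‖*‖av‖) * (‖z‖^2) := by
    have hcs := aux_cs f hconj hpos av z
    have hb1 : (f (star av * av)).re = ‖av‖*‖av‖ := by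
      rw [hfb]; simp [hnbav, ← hnb]
    have hb2 : (f (star z * z)).re ≤ ‖z‖^2 := aux_bound f hfn hf1 z
    have hb3 : 0 ≤ (f (star z * z)).re := hpos _ (star_mul_self_nonneg z)
    calc ‖f (star av * z)‖^2 ≤ (f (star av * av)).re * (f (star z * z)).re := hcs
      _ ≤ (‖av‖*‖av‖) * (‖z‖^2) := by rw [hb1]; gcongr
  have habs : (f (star av * z)).re ≤ ‖av‖ * ‖z‖ := by
    have h5 : ‖f (star av * z)‖ ≤ ‖av‖ * ‖z‖ := by
      have h7 : (‖av‖*‖av‖) * (‖z‖^2) = (‖av‖*‖z‖)^2 := by ring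
      rw [h7] at hup
      have h8 := Real.sqrt_le_sqrt hup
      rwa [Real.sqrt_sq (norm_nonneg _), Real.sqrt_sq (by positivity)] at h8
    exact le_trans (Complex.re_le_norm _) (by exact h5)
  have hpav : 0 < ‖av‖ := norm_pos_iff.mpr ha0
  have final : lam * ‖av‖ ≤ ‖z‖ := by
    have h6 := le_trans hlow habs
    nlinarith
  exact final
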